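/- Let G = F_1^W(K_n) be a 1-fan graph of the complete graph K_n on a set W ⊆ [n] with n ≥ 2, and S the polynomial ring in the vertex variables of G. Then depth(S/I_G) = 1. -/

import Mathlib

open MvPolynomial CategoryTheory

/-- The edge ideal of a simple graph. -/
noncomputable def edgeIdeal (K : Type) [Field K] {V : Type} (G : SimpleGraph V) :
    Ideal (MvPolynomial V K) :=
  Ideal.span {m | ∃ u v, G.Adj u v ∧ m = X u * X v}

/-- The ideal generated by the variables indexed by a set `A`. -/
noncomputable def varIdeal (K : Type) [Field K] {V : Type} (A : Set V) :
    Ideal (MvPolynomial V K) :=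
  Ideal.span ((fun v => (X v : MvPolynomial V K)) '' A)

/-- The edge ideal of the induced subgraph on `A`, inside the big polynomial ring. -/
noncomputable def edgeIdealOn (K : Type) [Field K] {V : Type} (G : SimpleGraph V) (A : Set V) :
    Ideal (MvPolynomial V K) :=
  Ideal.span {m | ∃ u v, G.Adj u v ∧ u ∈ A ∧ v ∈ A ∧ m = X u * X v}

/-- depth of the graded module `S/I` over `S = K[x_v : v ∈ V]`, with respect to the irrelevant
maximal ideal: the least `i` with `Ext^i(K, S/I) ≠ 0`. -/
noncomputable def depthQ (K : Type) [Field K] {V : Type} (I : Ideal (MvPolynomial V K)) : ℕ :=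
  sInf {i : ℕ |
    Nontrivial (((Ext (MvPolynomial V K) (ModuleCat (MvPolynomial V K)) i).obj
        (Opposite.op (ModuleCat.of (MvPolynomial V K)
          (MvPolynomial V K ⧸ varIdeal K (Set.univ : Set V))))).obj
      (ModuleCat.of (MvPolynomial V K) (MvPolynomial V K ⧸ I)))}

/-- The linear map `(v_j) ↦ ∑ v_j · g_j`. -/
noncomputable def combo {S : Type} [CommRing S] {n : ℕ} (g : Fin n → S) :
    (Fin n → S) →ₗ[S] S where
  toFun v := ∑ j, v j * g j
  map_add' u v := by simp [add_mul, Finset.sum_add_distrib]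
  map_smul' c v := by simp [Finset.mul_sum, mul_assoc]

/-- A (finite) graded free resolution of `S/I` over `S = K[x_v : v ∈ V]`:
`0 → F_len → ⋯ → F_1 → F_0 → S/I → 0`, where `F_i = ⊕_j S(-tw i j)` and all maps are
homogeneous of degree `0`. -/
structure GradedFreeResQ (K : Type) [Field K] {V : Type} (I : Ideal (MvPolynomial V K)) where
  rk : ℕ → ℕ
  tw : (i : ℕ) → Fin (rk i) → ℕ
  len : ℕ
  vanish : ∀ i, len < i → rk i = 0
  gen : Fin (rk 0) → MvPolynomial V K
  gen_hom : ∀ j, (gen j).IsHomogeneous (tw 0 j)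
  mat : (i : ℕ) → Matrix (Fin (rk i)) (Fin (rk (i+1))) (MvPolynomial V K)
  mat_hom : ∀ i a b, mat i a b = 0 ∨
    ∃ d, tw (i+1) b = tw i a + d ∧ (mat i a b).IsHomogeneous d
  aug_surj : Function.Surjective
    ((I.mkQ).comp (combo gen))
  exact0 : LinearMap.ker ((I.mkQ).comp (combo gen)) = LinearMap.range (Matrix.toLin' (mat 0))
  exact : ∀ i, LinearMap.ker (Matrix.toLin' (mat i)) =
    LinearMap.range (Matrix.toLin' (mat (i+1)))

/-- Castelnuovo–Mumford regularity of `S/I`: the minimum over all finite graded free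
resolutions of `S/I` of `max_{i,j} (tw i j - i)`. -/
noncomputable def regQ (K : Type) [Field K] {V : Type} (I : Ideal (MvPolynomial V K)) : ℤ :=
  sInf {r : ℤ | ∃ F : GradedFreeResQ K I, ∀ i (j : Fin (F.rk i)), (F.tw i j : ℤ) - i ≤ r}

/-- A (finite) graded free resolution of a homogeneous ideal `I ⊆ S`. -/
structure GradedFreeResId (K : Type) [Field K] {V : Type} (I : Ideal (MvPolynomial V K)) where
  rk : ℕ → ℕ
  tw : (i : ℕ) → Fin (rk i) → ℕ
  len : ℕ
  vanish : ∀ i, len < i → rk i = 0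
  gen : Fin (rk 0) → MvPolynomial V K
  gen_hom : ∀ j, (gen j).IsHomogeneous (tw 0 j)
  gen_span : Ideal.span (Set.range gen) = I
  mat : (i : ℕ) → Matrix (Fin (rk i)) (Fin (rk (i+1))) (MvPolynomial V K)
  mat_hom : ∀ i a b, mat i a b = 0 ∨
    ∃ d, tw (i+1) b = tw i a + d ∧ (mat i a b).IsHomogeneous d
  exact0 : LinearMap.ker (combo gen) = LinearMap.range (Matrix.toLin' (mat 0))
  exact : ∀ i, LinearMap.ker (Matrix.toLin' (mat i)) =
    LinearMap.range (Matrix.toLin' (mat (i+1)))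

/-- Castelnuovo–Mumford regularity of a homogeneous ideal `I`. -/
noncomputable def regId (K : Type) [Field K] {V : Type} (I : Ideal (MvPolynomial V K)) : ℤ :=
  sInf {r : ℤ | ∃ F : GradedFreeResId K I, ∀ i (j : Fin (F.rk i)), (F.tw i j : ℤ) - i ≤ r}

/-- The data defining a `k`-fan graph `F_k^W(K_n)`: the partition `W = W_1 ⊔ ⋯ ⊔ W_k` of a
subset of `[n]` (the block `W i` is enumerated by `w i`, with `r i = |W i|`), and the sizes
`a i j` of the cliques attached along each block. -/
structure FanData (n k : ℕ) where
  r : Fin k → ℕ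
  rpos : ∀ i, 1 ≤ r i
  w : (i : Fin k) → Fin (r i) → Fin n
  winj : Function.Injective (fun p : Σ i : Fin k, Fin (r i) => w p.1 p.2)
  a : (i : Fin k) → (j : Fin (r i)) → ℕ
  agt : ∀ i (j : Fin (r i)), (j : ℕ) + 1 < a i j

/-- `h_{i,j} = a_{i,j} - j` (with `j` 1-indexed) is the number of new vertices of the clique
`K_{a_{i,j}}`. -/
def FanData.h {n k : ℕ} (D : FanData n k) (i : Fin k) (j : Fin (D.r i)) : ℕ :=
  D.a i j - ((j : ℕ) + 1)

/-- The vertex set of the fan graph: the vertices of `K_n` plus the new vertices of all the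
attached cliques. -/
def FanVert {n k : ℕ} (D : FanData n k) : Type :=
  Fin n ⊕ Σ i : Fin k, Σ j : Fin (D.r i), Fin (D.h i j)

/-- Membership in (the vertex set of) the clique `K_{a_{i,j}}`. -/
def FanData.inClique {n k : ℕ} (D : FanData n k) (i : Fin k) (j : Fin (D.r i))
    (x : FanVert D) : Prop :=
  (∃ l : Fin (D.r i), l ≤ j ∧ x = Sum.inl (D.w i l)) ∨ (∃ m, x = Sum.inr ⟨i, j, m⟩)

/-- The fan graph `F_k^W(K_n)`: two distinct vertices are adjacent iff they both lie in `K_n`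
or both lie in one of the attached cliques. -/
def fanGraph {n k : ℕ} (D : FanData n k) : SimpleGraph (FanVert D) where
  Adj u v := u ≠ v ∧ ((∃ x y, u = Sum.inl x ∧ v = Sum.inl y) ∨
    ∃ i j, D.inClique i j u ∧ D.inClique i j v)
  symm := ⟨by
    rintro u v ⟨h1, h2⟩
    refine ⟨Ne.symm h1, ?_⟩
    rcases h2 with ⟨x, y, hx, hy⟩ | ⟨i, j, hu, hv⟩
    exacts [Or.inl ⟨y, x, hy, hx⟩, Or.inr ⟨i, j, hv, hu⟩]⟩
  loopless := ⟨by rintro u ⟨h, -⟩; exact h rfl⟩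

/-- The set `W ⊆ [n]` on which the fans are attached. -/
def FanData.W {n k : ℕ} (D : FanData n k) : Set (Fin n) :=
  Set.range fun p : Σ i : Fin k, Fin (D.r i) => D.w p.1 p.2

/-- `|W| = ∑ᵢ |Wᵢ|`. -/
def FanData.cardW {n k : ℕ} (D : FanData n k) : ℕ := ∑ i, D.r i

/-- Gluing two graphs: delete `A₁ ⊆ V₁` and `A₂ ⊆ V₂` and add a new vertex (`none`) whose
neighbors are those of `g₁` in `G₁` and of `g₂` in `G₂` (among the remaining vertices). -/
def glue {V₁ V₂ : Type} (G₁ : SimpleGraph V₁) (G₂ : SimpleGraph V₂)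
    (A₁ : Set V₁) (g₁ : V₁) (A₂ : Set V₂) (g₂ : V₂) :
    SimpleGraph (Option ({x : V₁ // x ∉ A₁} ⊕ {x : V₂ // x ∉ A₂})) where
  Adj u v := match u, v with
    | some (Sum.inl a), some (Sum.inl b) => G₁.Adj a b
    | some (Sum.inr a), some (Sum.inr b) => G₂.Adj a b
    | none, some (Sum.inl b) => G₁.Adj g₁ b
    | none, some (Sum.inr b) => G₂.Adj g₂ b
    | some (Sum.inl a), none => G₁.Adj g₁ a
    | some (Sum.inr a), none => G₂.Adj g₂ a
    | _, _ => False
  symm := ⟨by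
    rintro (_ | (a | a)) (_ | (b | b)) h <;>
      first | exact h | exact h.symm⟩
  loopless := ⟨by
    rintro (_ | (a | a)) h
    · exact h
    · exact G₁.loopless.irrefl _ h
    · exact G₂.loopless.irrefl _ h⟩

/-- The `∘` operation: remove the leaves `f₁, f₂` and identify their neighbors `v₁, v₂`. -/
def circGlue {V₁ V₂ : Type} (G₁ : SimpleGraph V₁) (G₂ : SimpleGraph V₂)
    (f₁ v₁ : V₁) (f₂ v₂ : V₂) :=
  glue G₁ G₂ {f₁, v₁} v₁ {f₂, v₂} v₂

/-- The `*` operation: identify the leaves `f₁` and `f₂`. -/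
def starGlue {V₁ V₂ : Type} (G₁ : SimpleGraph V₁) (G₂ : SimpleGraph V₂)
    (f₁ : V₁) (f₂ : V₂) :=
  glue G₁ G₂ {f₁} f₁ {f₂} f₂

/-- The clique sum `G ∪_v P₂`: attach a pendant edge (a new leaf `none`) at the vertex `v`. -/
def addPendant {V : Type} (G : SimpleGraph V) (v : V) : SimpleGraph (Option V) where
  Adj u u' := match u, u' with
    | some a, some b => G.Adj a b
    | none, some b => b = v
    | some a, none => a = v
    | none, none => False
  symm := ⟨by rintro (_ | a) (_ | b) h <;> first | exact h | exact h.symm⟩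
  loopless := ⟨by
    rintro (_ | a) h
    · exact h
    · exact G.loopless.irrefl _ h⟩

/-- An induced matching: a set of edges of `G` such that the induced subgraph on its vertices
contains no other edges. -/
def IsInducedMatching {V : Type} (G : SimpleGraph V) (M : Finset (Sym2 V)) : Prop :=
  ↑M ⊆ G.edgeSet ∧
    ∀ e ∈ M, ∀ e' ∈ M, e ≠ e' → ∀ u ∈ e, ∀ v ∈ e', u ≠ v ∧ ¬ G.Adj u v

/-- The induced matching number `ϑ(G)`. -/
noncomputable def indMatchNum {V : Type} (G : SimpleGraph V) : ℕ :=
  sSup {m : ℕ | ∃ M : Finset (Sym2 V), IsInducedMatching G M ∧ M.card = m}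

/-- A graph is chordal if it has no induced cycle of length `≥ 4`. -/
def IsChordal {V : Type} (G : SimpleGraph V) : Prop :=
  ∀ n : ℕ, 4 ≤ n → IsEmpty (SimpleGraph.cycleGraph n ↪g G)

/-- `C` is a vertex cover of `G`. -/
def IsVertexCover {V : Type} (G : SimpleGraph V) (C : Set V) : Prop :=
  ∀ u v, G.Adj u v → u ∈ C ∨ v ∈ C

instance {n k : ℕ} (D : FanData n k) : Fintype (FanVert D) :=
  inferInstanceAs (Fintype (Fin n ⊕ Σ i : Fin k, Σ j : Fin (D.r i), Fin (D.h i j)))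

/-- The last index of the branch on the block `W i`, i.e. the index of `K_{a_{i,r_i}}`. -/
def FanData.lastIdx {n k : ℕ} (D : FanData n k) (i : Fin k) : Fin (D.r i) :=
  ⟨D.r i - 1, Nat.sub_lt (D.rpos i) one_pos⟩

/-- `p = |{(i,j) : h_{i,j} ≥ 2}|`. -/
noncomputable def FanData.p {n k : ℕ} (D : FanData n k) : ℕ :=
  (Finset.univ.filter (fun q : Σ i : Fin k, Fin (D.r i) => 2 ≤ D.h q.1 q.2)).card

/-- `T = max{|W_1|, …, |W_k|}`. -/
def FanData.maxBlock {n k : ℕ} (D : FanData n k) : ℕ := Finset.univ.sup D.r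

/-- `T' = max{|W_{i₀}| - 1, |W_i| (i ≠ i₀)}`. -/
def FanData.maxBlock' {n k : ℕ} (D : FanData n k) (i₀ : Fin k) : ℕ :=
  Finset.univ.sup (Function.update D.r i₀ (D.r i₀ - 1))


namespace Stmt9Aux

noncomputable section
variable {R : Type} [CommRing R] (J : Ideal R)

noncomputable def syzObj : ℕ → ModuleCat.{0} R
  | 0 => ModuleCat.of R J
  | (n+1) => ModuleCat.of R
      (LinearMap.ker (Finsupp.linearCombination R (id : syzObj n → syzObj n)))

noncomputable def resX : ℕ → ModuleCat.{0} R
  | 0 => ModuleCat.of R R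
  | (n+1) => ModuleCat.of R ((syzObj J n : Type) →₀ R)

noncomputable def resTot (n : ℕ) : (resX J (n+1) : Type) →ₗ[R] (syzObj J n : Type) :=
  Finsupp.linearCombination R id

noncomputable def resIncl : (n : ℕ) → ((syzObj J n : Type) →ₗ[R] (resX J n : Type))
  | 0 => J.subtype
  | (n+1) => (LinearMap.ker (Finsupp.linearCombination R (id : syzObj J n → syzObj J n))).subtype

noncomputable def resD (n : ℕ) : resX J (n+1) ⟶ resX J n :=
  ModuleCat.ofHom ((resIncl J n).comp (resTot J n))

lemma resTot_incl (n : ℕ) (y : syzObj J (n+1)) : resTot J n (resIncl J (n+1) y) = 0 := y.2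

lemma resTot_surj (n : ℕ) : Function.Surjective (resTot J n) :=
  Finsupp.linearCombination_id_surjective R _

lemma resIncl_inj (n : ℕ) : Function.Injective (resIncl J n) := by
  cases n <;> exact Subtype.val_injective

lemma range_resIncl_succ (n : ℕ) :
    LinearMap.range (resIncl J (n+1)) =
      LinearMap.ker (resTot J n) := Submodule.range_subtype _

lemma range_resIncl_zero :
    LinearMap.range (resIncl J 0) = (J : Submodule R R) := Submodule.range_subtype _

lemma resD_comp (n : ℕ) : resD J (n+1) ≫ resD J n = 0 := by
  apply ModuleCat.hom_ext
  apply LinearMap.ext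
  intro z
  show resIncl J n (resTot J n (resIncl J (n+1) (resTot J (n+1) z))) = 0
  rw [resTot_incl, map_zero]

noncomputable def resComplex : ChainComplex (ModuleCat.{0} R) ℕ :=
  ChainComplex.of (resX J) (resD J) (resD_comp J)

instance resComplex_projective (n : ℕ) : Projective ((resComplex J).X n) := by
  cases n with
  | zero => exact ModuleCat.projective_of_free (M := resX J 0) (Module.Basis.singleton PUnit.{1} R)
  | succ n => exact ModuleCat.projective_of_free (M := resX J (n+1)) Finsupp.basisSingleOne

lemma resComplex_exact (n : ℕ) :
    (ShortComplex.mk (resD J (n+1)) (resD J n) (resD_comp J n)).Exact := by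
  rw [ShortComplex.moduleCat_exact_iff]
  intro x hx
  -- hx : resIncl J n (resTot J n x) = 0
  have h2 : resTot J n x = 0 := by
    apply resIncl_inj J n
    rw [map_zero]
    exact hx
  obtain ⟨y, hy⟩ := resTot_surj J (n+1) (⟨x, h2⟩ : LinearMap.ker (resTot J n))
  refine ⟨y, ?_⟩
  show resIncl J (n+1) (resTot J (n+1) y) = x
  rw [hy]
  rfl

lemma resComplex_exactAt_succ (n : ℕ) : (resComplex J).ExactAt (n + 1) := by
  rw [HomologicalComplex.exactAt_iff' _ (n + 1 + 1) (n + 1) n (by simp) (by simp)]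
  have : (resComplex J).sc' (n+1+1) (n+1) n =
      ShortComplex.mk (resD J (n+1)) (resD J n) (resD_comp J n) := by
    dsimp [HomologicalComplex.sc', HomologicalComplex.shortComplexFunctor']
    simp only [resComplex, ChainComplex.of_d]
  rw [this]
  exact resComplex_exact J n

lemma resD_comp_mkQ : resD J 0 ≫ ModuleCat.ofHom J.mkQ = 0 := by
  apply ModuleCat.hom_ext
  apply LinearMap.ext
  intro z
  show J.mkQ (resIncl J 0 (resTot J 0 z)) = 0
  refine (Submodule.Quotient.mk_eq_zero J).2 ?_
  exact (resTot J 0 z).2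

lemma resExact0 :
    (ShortComplex.mk (resD J 0) (ModuleCat.ofHom J.mkQ) (resD_comp_mkQ J)).Exact := by
  rw [ShortComplex.moduleCat_exact_iff]
  intro x hx
  have hxJ : x ∈ J := by
    exact (Submodule.Quotient.mk_eq_zero J).1 hx
  refine ⟨Finsupp.single (show (syzObj J 0 : Type) from ⟨x, hxJ⟩) 1, ?_⟩
  show resIncl J 0 (resTot J 0 _) = x
  rw [show resTot J 0 (Finsupp.single _ 1) = _ from
    Finsupp.linearCombination_single R 1 _]
  simp
  rfl

lemma resEpi : Epi (ModuleCat.ofHom J.mkQ) := by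
  rw [ModuleCat.epi_iff_surjective]
  exact Submodule.mkQ_surjective J

noncomputable def resOf : ProjectiveResolution (ModuleCat.of R (R ⧸ J)) where
  complex := resComplex J
  π := (ChainComplex.toSingle₀Equiv _ _).symm ⟨ModuleCat.ofHom J.mkQ, by
        rw [show (resComplex J).d 1 0 = resD J 0 from ChainComplex.of_d (resX J) (resD J) 0]
        exact resD_comp_mkQ J⟩
  quasiIso := ⟨fun n => by
    cases n with
    | zero =>
      rw [ChainComplex.quasiIsoAt₀_iff, ShortComplex.quasiIso_iff_of_zeros']
      · refine (ShortComplex.exact_and_epi_g_iff_of_iso ?_).2 ⟨resExact0 J, resEpi J⟩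
        exact ShortComplex.isoMk (Iso.refl _) (Iso.refl _) (Iso.refl _)
          (by simp [resComplex]; exact (ChainComplex.of_d (resX J) (resD J) 0).symm) (by rfl)
      all_goals rfl
    | succ n =>
      rw [quasiIsoAt_iff_exactAt']
      · apply resComplex_exactAt_succ
      · apply ChainComplex.exactAt_succ_single_obj⟩

section HomCompute

variable (M0 : ModuleCat.{0} R)

lemma yc_exactAt_zero
    (hinj : ∀ φ : resX J 0 ⟶ M0, resD J 0 ≫ φ = 0 → φ = 0) :
    ((resComplex J).linearYonedaObj R M0).ExactAt 0 := by
  rw [HomologicalComplex.exactAt_iff' _ 0 0 1 (by simp) (by simp)]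
  rw [ShortComplex.moduleCat_exact_iff]
  intro φ hφ
  have hφ' : (resComplex J).d 1 0 ≫ (show (resComplex J).X 0 ⟶ M0 from φ) = 0 := hφ
  rw [show (resComplex J).d 1 0 = resD J 0 from ChainComplex.of_d (resX J) (resD J) 0] at hφ'
  have hz : (show (resComplex J).X 0 ⟶ M0 from φ) = 0 := hinj _ hφ'
  exact ⟨0, by rw [map_zero]; exact hz.symm⟩

lemma yc_not_exactAt_one
    (Φ : (syzObj J 0 : Type) →ₗ[R] M0)
    (hΦ : ∀ φ : resX J 0 ⟶ M0, Φ ≠ LinearMap.comp φ.hom (resIncl J 0)) :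
    ¬ ((resComplex J).linearYonedaObj R M0).ExactAt 1 := by
  intro h
  rw [HomologicalComplex.exactAt_iff' _ 0 1 2 (by simp) (by simp)] at h
  rw [ShortComplex.moduleCat_exact_iff] at h
  set ψ : (resComplex J).X 1 ⟶ M0 := ModuleCat.ofHom (Φ.comp (resTot J 0)) with hψ
  have hg : (((resComplex J).linearYonedaObj R M0).sc' 0 1 2).g ψ = 0 := by
    show (resComplex J).d 2 1 ≫ ψ = 0
    rw [show (resComplex J).d 2 1 = resD J 1 from ChainComplex.of_d (resX J) (resD J) 1]
    apply ModuleCat.hom_ext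
    apply LinearMap.ext
    intro z
    show Φ (resTot J 0 (resIncl J 1 (resTot J 1 z))) = 0
    rw [resTot_incl, map_zero]
  obtain ⟨φ, hfφ⟩ := h ψ hg
  have hfφ' : (resComplex J).d 1 0 ≫ (show (resComplex J).X 0 ⟶ M0 from φ) = ψ := hfφ
  rw [show (resComplex J).d 1 0 = resD J 0 from ChainComplex.of_d (resX J) (resD J) 0] at hfφ'
  apply hΦ (show (resComplex J).X 0 ⟶ M0 from φ)
  apply LinearMap.ext
  intro x
  have hpt := congrArg
    (fun f : (resComplex J).X 1 ⟶ M0 => f (Finsupp.single x 1)) hfφ'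
  have htot : resTot J 0 (Finsupp.single x 1) = x := by
    show (Finsupp.linearCombination R id) (Finsupp.single x 1) = x
    rw [Finsupp.linearCombination_single, one_smul]
    rfl
  have hpt2 : (show (resComplex J).X 0 ⟶ M0 from φ) (resIncl J 0 (resTot J 0 (Finsupp.single x 1)))
      = Φ (resTot J 0 (Finsupp.single x 1)) := hpt
  rw [htot] at hpt2
  exact hpt2.symm

end HomCompute

section ExtGlue
open Opposite

variable (M0 : ModuleCat.{0} R)

lemma modcat_subsingleton_of_isZero {M : ModuleCat.{0} R} (h : Limits.IsZero M) :
    Subsingleton M := by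
  refine ⟨fun a b => ?_⟩
  have hid : (𝟙 M : M ⟶ M) = 0 := h.eq_of_src _ _
  have ha : (𝟙 M : M ⟶ M) a = (0 : M ⟶ M) a := by rw [hid]
  have hb : (𝟙 M : M ⟶ M) b = (0 : M ⟶ M) b := by rw [hid]
  simpa using ha.trans hb.symm

lemma ext_zero_not_nontrivial
    (hinj : ∀ φ : resX J 0 ⟶ M0, resD J 0 ≫ φ = 0 → φ = 0) :
    ¬ Nontrivial (((Ext R (ModuleCat.{0} R) 0).obj (op (ModuleCat.of R (R ⧸ J)))).obj M0) := by
  intro hN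
  have e := (resOf J).isoExt (R := R) 0 M0
  haveI := hN
  have hNh : Nontrivial (((resOf J).complex.linearYonedaObj R M0).homology 0) :=
    (e.symm.toLinearEquiv).toEquiv.nontrivial
  have hex : ((resComplex J).linearYonedaObj R M0).ExactAt 0 := yc_exactAt_zero J M0 hinj
  have hz := (HomologicalComplex.exactAt_iff_isZero_homology _ _).1 hex
  have : Subsingleton (((resComplex J).linearYonedaObj R M0).homology 0) :=
    modcat_subsingleton_of_isZero hz
  exact (not_nontrivial_iff_subsingleton.2 this) hNh

lemma ext_one_nontrivial
    (Φ : (syzObj J 0 : Type) →ₗ[R] M0)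
    (hΦ : ∀ φ : resX J 0 ⟶ M0, Φ ≠ LinearMap.comp φ.hom (resIncl J 0)) :
    Nontrivial (((Ext R (ModuleCat.{0} R) 1).obj (op (ModuleCat.of R (R ⧸ J)))).obj M0) := by
  by_contra hN
  have hsub : Subsingleton (((Ext R (ModuleCat.{0} R) 1).obj (op (ModuleCat.of R (R ⧸ J)))).obj M0) :=
    not_nontrivial_iff_subsingleton.1 hN
  have e := (resOf J).isoExt (R := R) 1 M0
  haveI := hsub
  haveI hsub2 : Subsingleton (((resComplex J).linearYonedaObj R M0).homology 1) :=
    (e.symm.toLinearEquiv).toEquiv.subsingleton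
  have hz : Limits.IsZero (((resComplex J).linearYonedaObj R M0).homology 1) :=
    ModuleCat.isZero_of_subsingleton _
  have hex := (HomologicalComplex.exactAt_iff_isZero_homology _ _).2 hz
  exact yc_not_exactAt_one J M0 Φ hΦ hex

end ExtGlue


section Monomial
variable (K : Type) [Field K] {V : Type} (G : SimpleGraph V)

lemma X_mul_X_eq_monomial (u v : V) :
    (X u * X v : MvPolynomial V K) = monomial (Finsupp.single u 1 + Finsupp.single v 1) 1 := by
  rw [X, X, monomial_mul, one_mul]

lemma edgeIdeal_eq_span_monomial :
    edgeIdeal K G = Ideal.span ((fun s => monomial s (1 : K)) ''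
      {s : V →₀ ℕ | ∃ u v, G.Adj u v ∧ s = Finsupp.single u 1 + Finsupp.single v 1}) := by
  unfold edgeIdeal
  congr 1
  ext m
  constructor
  · rintro ⟨u, v, huv, rfl⟩
    exact ⟨Finsupp.single u 1 + Finsupp.single v 1, ⟨u, v, huv, rfl⟩,
      (X_mul_X_eq_monomial K u v).symm⟩

  · rintro ⟨s, ⟨u, v, huv, rfl⟩, rfl⟩
    exact ⟨u, v, huv, (X_mul_X_eq_monomial K u v).symm⟩

lemma mem_edgeIdeal_iff {q : MvPolynomial V K} :
    q ∈ edgeIdeal K G ↔ ∀ m ∈ q.support, ∃ u v, G.Adj u v ∧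
      Finsupp.single u 1 + Finsupp.single v 1 ≤ m := by
  rw [edgeIdeal_eq_span_monomial, mem_ideal_span_monomial_image]
  constructor
  · intro h m hm
    obtain ⟨s, ⟨u, v, huv, rfl⟩, hle⟩ := h m hm
    exact ⟨u, v, huv, hle⟩
  · intro h m hm
    obtain ⟨u, v, huv, hle⟩ := h m hm
    exact ⟨_, ⟨u, v, huv, rfl⟩, hle⟩

lemma edge_le_single_absurd {u v a : V} (huv : u ≠ v)
    (h : Finsupp.single u 1 + Finsupp.single v 1 ≤ Finsupp.single a (1 : ℕ)) : False := by
  have hu : u = a := by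
    by_contra hua
    have h1 := h u
    rw [Finsupp.add_apply, Finsupp.single_eq_same,
      Finsupp.single_eq_of_ne' (fun hh : a = u => hua hh.symm)] at h1
    omega
  have hv : v = a := by
    by_contra hva
    have h1 := h v
    rw [Finsupp.add_apply, Finsupp.single_eq_same,
      Finsupp.single_eq_of_ne' (fun hh : a = v => hva hh.symm)] at h1
    omega
  exact huv (hu.trans hv.symm)

lemma coeff_zero_of_X_mul_mem {q : MvPolynomial V K} {a : V}
    (h : X a * q ∈ edgeIdeal K G) : coeff 0 q = 0 := by
  by_contra hc
  have hmem : (Finsupp.single a 1 : V →₀ ℕ) ∈ (X a * q).support := by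
    rw [mem_support_iff]
    have : coeff (Finsupp.single a 1 + 0) (X a * q) = coeff 0 q := coeff_X_mul 0 a q
    rw [add_zero] at this
    rw [this]
    exact hc
  obtain ⟨u, v, huv, hle⟩ := (mem_edgeIdeal_iff K G).1 h _ hmem
  exact edge_le_single_absurd huv.ne hle

lemma socle_edgeIdeal [Nonempty V] {q : MvPolynomial V K}
    (h : ∀ v : V, X v * q ∈ edgeIdeal K G) : q ∈ edgeIdeal K G := by
  rw [mem_edgeIdeal_iff]
  intro m hm
  by_cases hm0 : m = 0
  · subst hm0
    exfalso
    have := coeff_zero_of_X_mul_mem K G (h (Classical.arbitrary V))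
    rw [mem_support_iff] at hm
    exact hm this
  · obtain ⟨v, hv⟩ : ∃ v, m v ≠ 0 := by
      by_contra hall
      push_neg at hall
      exact hm0 (Finsupp.ext hall)
    have hmem : (Finsupp.single v 1 + m) ∈ (X v * q).support := by
      rw [support_X_mul]
      exact Finset.mem_map.2 ⟨m, hm, rfl⟩
    obtain ⟨u, u', huv, hle⟩ := (mem_edgeIdeal_iff K G).1 (h v) _ hmem
    refine ⟨u, u', huv, ?_⟩
    intro x
    by_cases hx : x = v
    · subst hx
      have hne := huv.ne
      have h1 : ((Finsupp.single u 1 + Finsupp.single u' 1 : V →₀ ℕ)) x ≤ 1 := by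
        rw [Finsupp.add_apply]
        by_cases hux : u = x
        · subst hux
          rw [Finsupp.single_eq_same, Finsupp.single_eq_of_ne' (fun hh => hne hh.symm)]
          omega
        · rw [Finsupp.single_eq_of_ne' hux]
          have h2 : (Finsupp.single u' 1 : V →₀ ℕ) x ≤ 1 := by
            by_cases hux' : u' = x
            · subst hux'
              rw [Finsupp.single_eq_same]
            · rw [Finsupp.single_eq_of_ne' hux']
              omega
          omega
      exact h1.trans (Nat.one_le_iff_ne_zero.2 hv)
    · have := hle x
      simpa [Finsupp.single_apply, Ne.symm hx] using this
end Monomial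



section Fan

variable {n : ℕ} (K : Type) [Field K] (D : FanData n 1)

/-- The universal vertex `w₁ = u₁` of the fan graph. -/
def w0 : FanVert D := Sum.inl (D.w 0 ⟨0, D.rpos 0⟩)

lemma universal_adj (v : FanVert D) (hv : v ≠ w0 D) : (fanGraph D).Adj (w0 D) v := by
  refine ⟨fun h => hv h.symm, ?_⟩
  cases v with
  | inl x => exact Or.inl ⟨_, x, rfl, rfl⟩
  | inr p =>
    obtain ⟨i, j, m⟩ := p
    have hi : i = 0 := Subsingleton.elim _ _
    subst hi
    exact Or.inr ⟨0, j, Or.inl ⟨⟨0, D.rpos 0⟩, Fin.le_def.2 (Nat.zero_le _), rfl⟩,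
      Or.inr ⟨m, rfl⟩⟩

lemma edge_mem {V : Type} {G : SimpleGraph V} {u v : V} (h : G.Adj u v) :
    (X u * X v : MvPolynomial V K) ∈ edgeIdeal K G :=
  Ideal.subset_span ⟨u, v, h, rfl⟩

instance fanVertDecEq {n k : ℕ} (D : FanData n k) : DecidableEq (FanVert D) :=
  inferInstanceAs (DecidableEq (Fin n ⊕ Σ i : Fin k, Σ j : Fin (D.r i), Fin (D.h i j)))

/-- The algebra map killing all variables except `X w₀`. -/
noncomputable def sig : MvPolynomial (FanVert D) K →ₐ[K] MvPolynomial (FanVert D) K :=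
  aeval (fun v => if v = w0 D then X v else 0)

lemma sig_X (v : FanVert D) : sig K D (X v) = if v = w0 D then X v else 0 := by
  unfold sig
  rw [aeval_X]

lemma sub_sig_mul_mem (s : MvPolynomial (FanVert D) K) :
    (s - sig K D s) * X (w0 D) ∈ edgeIdeal K (fanGraph D) := by
  induction s using MvPolynomial.induction_on with
  | C a =>
    have : sig K D (C a) = C a := by
      unfold sig
      rw [aeval_C]
      rfl
    rw [this, sub_self, zero_mul]
    exact Ideal.zero_mem _
  | add p q hp hq =>
    have heq : (p + q - sig K D (p + q)) * X (w0 D) =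
        (p - sig K D p) * X (w0 D) + (q - sig K D q) * X (w0 D) := by
      rw [map_add]; ring
    rw [heq]
    exact add_mem hp hq
  | mul_X p v hp =>
    rw [map_mul, sig_X]
    by_cases hv : v = w0 D
    · subst hv
      rw [if_pos rfl]
      have heq : (p * X (w0 D) - sig K D p * X (w0 D)) * X (w0 D) =
          ((p - sig K D p) * X (w0 D)) * X (w0 D) := by ring
      rw [heq]
      exact Ideal.mul_mem_right _ _ hp
    · rw [if_neg hv]
      have he : (X (w0 D) * X v : MvPolynomial (FanVert D) K) ∈ edgeIdeal K (fanGraph D) :=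
        edge_mem K (universal_adj D v hv)
      have heq : (p * X v - sig K D p * 0) * X (w0 D) =
          (X (w0 D) * X v) * p := by ring
      rw [heq]
      exact Ideal.mul_mem_right _ _ he

lemma sig_mem_span {q : MvPolynomial (FanVert D) K}
    (hq : q ∈ varIdeal K (Set.univ : Set (FanVert D))) :
    sig K D q ∈ Ideal.span {(X (w0 D) : MvPolynomial (FanVert D) K)} := by
  unfold varIdeal at hq
  induction hq using Submodule.span_induction with
  | mem x hx =>
    obtain ⟨v, -, rfl⟩ := hx
    rw [sig_X]
    split_ifs with h
    · subst h
      exact Ideal.subset_span rfl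
    · exact Ideal.zero_mem _
  | zero => rw [map_zero]; exact Ideal.zero_mem _
  | add x y _ _ hx hy => rw [map_add]; exact add_mem hx hy
  | smul a x _ hx =>
    rw [smul_eq_mul, map_mul]
    exact Ideal.mul_mem_left _ _ hx

/-- The non-principal homomorphism `m → S/I`, `f ↦ [σ(f)]`. -/
noncomputable def Phi :
    (varIdeal K (Set.univ : Set (FanVert D)) : Submodule (MvPolynomial (FanVert D) K)
        (MvPolynomial (FanVert D) K)) →ₗ[MvPolynomial (FanVert D) K]
      (MvPolynomial (FanVert D) K ⧸ edgeIdeal K (fanGraph D)) where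
  toFun x := Submodule.Quotient.mk (sig K D x.1)
  map_add' a b := by
    have h0 : ((a + b : (varIdeal K (Set.univ : Set (FanVert D)) : Submodule _ _)) :
        MvPolynomial (FanVert D) K) = a.1 + b.1 := rfl
    rw [h0, map_add]
    rfl
  map_smul' c x := by
    have h1 : ((c • x : (varIdeal K (Set.univ : Set (FanVert D)) : Submodule _ _)) :
        MvPolynomial (FanVert D) K) = c * x.1 := rfl
    rw [h1, map_mul]
    have h2 : c • (Submodule.Quotient.mk (sig K D x.1) :
        MvPolynomial (FanVert D) K ⧸ edgeIdeal K (fanGraph D)) =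
        Submodule.Quotient.mk (c * sig K D x.1) := by
      rw [← Submodule.Quotient.mk_smul, smul_eq_mul]
    rw [RingHom.id_apply, h2, Submodule.Quotient.eq]
    obtain ⟨a, ha⟩ := Ideal.mem_span_singleton'.1 (sig_mem_span K D x.2)
    have heq : sig K D c * sig K D x.1 - c * sig K D x.1 =
        -(((c - sig K D c) * X (w0 D)) * a) := by rw [← ha]; ring
    rw [heq]
    exact neg_mem (Ideal.mul_mem_right _ _ (sub_sig_mul_mem K D c))

end Fan


end

end Stmt9Aux

/-- for a 1-fan graph, `depth(S/I_G) = 1`. -/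
theorem stmt9 {n : ℕ} (K : Type) [Field K] (hn : 2 ≤ n) (D : FanData n 1) :
    depthQ K (edgeIdeal K (fanGraph D)) = 1 := by
  classical
  haveI : Nonempty (FanVert D) := ⟨Stmt9Aux.w0 D⟩
  set S' := MvPolynomial (FanVert D) K with hS'
  set I := edgeIdeal K (fanGraph D) with hI
  set J := varIdeal K (Set.univ : Set (FanVert D)) with hJ
  set M0 : ModuleCat S' := ModuleCat.of S' (S' ⧸ I) with hM0
  have hXmem : ∀ v : FanVert D, (X v : S') ∈ J := fun v =>
    Ideal.subset_span ⟨v, Set.mem_univ v, rfl⟩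
  -- socle condition
  have hinj : ∀ φ : Stmt9Aux.resX J 0 ⟶ M0, Stmt9Aux.resD J 0 ≫ φ = 0 → φ = 0 := by
    intro φ hφ
    have hker : ∀ x : (Stmt9Aux.syzObj J 0 : Type),
        φ (Stmt9Aux.resIncl J 0 x) = 0 := by
      intro x
      obtain ⟨z, hz⟩ := Stmt9Aux.resTot_surj J 0 x
      have h := LinearMap.congr_fun (congrArg ModuleCat.Hom.hom hφ) z
      rw [← hz]
      exact h
    obtain ⟨u, hu⟩ := Submodule.Quotient.mk_surjective I (φ (1 : S'))
    have hXu : ∀ v : FanVert D, (X v : S') * u ∈ I := by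
      intro v
      have h1 : φ ((X v : S')) = 0 := hker ⟨X v, hXmem v⟩
      have h2 : φ ((X v : S')) = (X v : S') • φ (1 : S') := by
        exact (congrArg φ.hom (mul_one (X v : S')).symm).trans (φ.hom.map_smul (X v : S') (1 : S'))
      rw [h2, ← hu, ← Submodule.Quotient.mk_smul, smul_eq_mul] at h1
      exact (Submodule.Quotient.mk_eq_zero I).1 h1
    have huI : u ∈ I := Stmt9Aux.socle_edgeIdeal K (fanGraph D) hXu
    have hφ1 : φ (1 : S') = 0 := by
      rw [← hu]
      exact (Submodule.Quotient.mk_eq_zero I).2 huI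
    apply ModuleCat.hom_ext
    apply LinearMap.ext
    intro s
    have h5 : φ s = (show S' from s) • φ (1 : S') := by
      calc φ s = φ ((show S' from s) * (1 : S')) := by rw [mul_one]
      _ = φ ((show S' from s) • (1 : S')) := by rw [smul_eq_mul]
      _ = (show S' from s) • φ (1 : S') := map_smul φ.hom _ _
    rw [h5, hφ1, smul_zero]
    rfl
  -- the non-principal cocycle
  have hΦ : ∀ φ : Stmt9Aux.resX J 0 ⟶ M0,
      (show (Stmt9Aux.syzObj J 0 : Type) →ₗ[S'] M0 from Stmt9Aux.Phi K D) ≠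
        LinearMap.comp φ.hom (Stmt9Aux.resIncl J 0) := by
    intro φ heq
    obtain ⟨u, hu⟩ := Submodule.Quotient.mk_surjective I (φ (1 : S'))
    have happ : ∀ x : (Stmt9Aux.syzObj J 0 : Type),
        (Submodule.Quotient.mk (Stmt9Aux.sig K D (x.1 : S')) :
          S' ⧸ I) = Submodule.Quotient.mk ((x.1 : S') * u) := by
      intro x
      have h1 := LinearMap.congr_fun heq x
      have h1' : (Submodule.Quotient.mk (Stmt9Aux.sig K D (x.1 : S')) : S' ⧸ I)
          = φ ((x.1 : S')) := h1
      have h2 : φ ((x.1 : S')) = (x.1 : S') • φ (1 : S') := by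
        exact (congrArg φ.hom (mul_one (x.1 : S')).symm).trans (φ.hom.map_smul (x.1 : S') (1 : S'))
      rw [h2, ← hu, ← Submodule.Quotient.mk_smul, smul_eq_mul] at h1'
      exact h1'
    -- evaluate at X w0
    have hw := happ ⟨X (Stmt9Aux.w0 D), hXmem _⟩
    rw [Stmt9Aux.sig_X, if_pos rfl, Submodule.Quotient.eq] at hw
    have hw2 : (X (Stmt9Aux.w0 D) : S') * (1 - u) ∈ I := by
      have : (X (Stmt9Aux.w0 D) : S') * (1 - u)
          = X (Stmt9Aux.w0 D) - X (Stmt9Aux.w0 D) * u := by ring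
      rw [this]
      exact hw
    have hc1 : MvPolynomial.coeff 0 ((1 : S') - u) = 0 :=
      Stmt9Aux.coeff_zero_of_X_mul_mem K (fanGraph D) hw2
    -- pick another vertex
    haveI : Nontrivial (Fin n) := by
      refine ⟨⟨⟨0, by omega⟩, ⟨1, by omega⟩, ?_⟩⟩
      intro h
      exact absurd (congrArg Fin.val h) (by simp)
    obtain ⟨i1, hi1⟩ := exists_ne (D.w 0 ⟨0, D.rpos 0⟩)
    set b : FanVert D := Sum.inl i1 with hbdef
    have hb : b ≠ Stmt9Aux.w0 D := by
      intro h
      exact hi1 (Sum.inl.inj h)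
    have hbv := happ ⟨X b, hXmem _⟩
    rw [Stmt9Aux.sig_X, if_neg hb, Submodule.Quotient.eq] at hbv
    have hb2 : (X b : S') * u ∈ I := by
      have h3 : (X b : S') * u = -((0 : S') - X b * u) := by ring
      rw [h3]
      exact neg_mem hbv
    have hc2 : MvPolynomial.coeff 0 u = 0 :=
      Stmt9Aux.coeff_zero_of_X_mul_mem K (fanGraph D) hb2
    rw [MvPolynomial.coeff_sub, hc2, sub_zero] at hc1
    have : (1 : K) = 0 := by
      rw [← MvPolynomial.coeff_zero_one (R := K) (σ := FanVert D)]
      exact hc1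
    exact one_ne_zero this
  have h1mem : (1 : ℕ) ∈ {i : ℕ |
      Nontrivial (((Ext (MvPolynomial (FanVert D) K)
        (ModuleCat (MvPolynomial (FanVert D) K)) i).obj
          (Opposite.op (ModuleCat.of (MvPolynomial (FanVert D) K)
            (MvPolynomial (FanVert D) K ⧸ varIdeal K (Set.univ : Set (FanVert D)))))).obj
        (ModuleCat.of (MvPolynomial (FanVert D) K)
          (MvPolynomial (FanVert D) K ⧸ edgeIdeal K (fanGraph D))))} :=
    Stmt9Aux.ext_one_nontrivial J M0
      (show (Stmt9Aux.syzObj J 0 : Type) →ₗ[S'] M0 from Stmt9Aux.Phi K D) hΦ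
  have h0not : (0 : ℕ) ∉ {i : ℕ |
      Nontrivial (((Ext (MvPolynomial (FanVert D) K)
        (ModuleCat (MvPolynomial (FanVert D) K)) i).obj
          (Opposite.op (ModuleCat.of (MvPolynomial (FanVert D) K)
            (MvPolynomial (FanVert D) K ⧸ varIdeal K (Set.univ : Set (FanVert D)))))).obj
        (ModuleCat.of (MvPolynomial (FanVert D) K)
          (MvPolynomial (FanVert D) K ⧸ edgeIdeal K (fanGraph D))))} :=
    Stmt9Aux.ext_zero_not_nontrivial J M0 hinj
  unfold depthQ
  refine le_antisymm (Nat.sInf_le h1mem) ?_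
  refine Nat.one_le_iff_ne_zero.2 ?_
  intro h0
  rcases Nat.sInf_eq_zero.1 h0 with h | h
  · exact h0not h
  · rw [h] at h1mem
    exact h1mem
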